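/- Let A = [[M, F],[F^T, B]] be symmetric with F entrywise nonpositive and M an invertible copositive matrix with negative off-diagonal entries. Then A is SPN if and only if the Schur complement A/M = B − F^T M^{−1} F is SPN. -/

import Mathlib

open Matrix

def Copositive {ι : Type*} [Fintype ι] (A : Matrix ι ι ℝ) : Prop :=
  ∀ x : ι → ℝ, (∀ i, 0 ≤ x i) → 0 ≤ x ⬝ᵥ A.mulVec x

def SPN {ι : Type*} [Fintype ι] (A : Matrix ι ι ℝ) : Prop :=
  ∃ P N : Matrix ι ι ℝ, P.PosSemidef ∧ (∀ i j, 0 ≤ N i j) ∧ A = P + N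

def Mn {n : ℕ} (A : Matrix (Fin n) (Fin n) ℝ) : Prop :=
  ∀ i j k l : Fin n, i ≤ k → j ≤ l → i ≠ j → k ≠ l → A i j ≤ A k l

section Aux
variable {n : Type*} [Fintype n] [DecidableEq n]

lemma star_pi_real (x : n → ℝ) : star x = x := funext fun _ => star_trivial _

lemma abs_quad_le {A : Matrix n n ℝ} (hz : ∀ i j, i ≠ j → A i j ≤ 0) (x : n → ℝ) :
    (fun i => |x i|) ⬝ᵥ A *ᵥ (fun i => |x i|) ≤ x ⬝ᵥ A *ᵥ x := by
  simp only [dotProduct, mulVec, Finset.mul_sum]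
  refine Finset.sum_le_sum fun i _ => Finset.sum_le_sum fun j _ => ?_
  rcases eq_or_ne i j with rfl | hij
  · refine le_of_eq ?_
    calc |x i| * (A i i * |x i|) = A i i * (|x i| * |x i|) := by ring
      _ = A i i * (x i * x i) := by rw [abs_mul_abs_self]
      _ = x i * (A i i * x i) := by ring
  · have h1 : x i * x j ≤ |x i| * |x j| := by
      rw [← abs_mul]; exact le_abs_self _
    calc |x i| * (A i j * |x j|) = A i j * (|x i| * |x j|) := by ring
      _ ≤ A i j * (x i * x j) := mul_le_mul_of_nonpos_left h1 (hz i j hij)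
      _ = x i * (A i j * x j) := by ring

lemma mul_entry_nonneg {a b c : Type*} [Fintype b] {X : Matrix a b ℝ} {Y : Matrix b c ℝ}
    (hX : ∀ i j, 0 ≤ X i j) (hY : ∀ i j, 0 ≤ Y i j) : ∀ i j, 0 ≤ (X * Y) i j := by
  intro i j
  rw [Matrix.mul_apply]
  exact Finset.sum_nonneg fun k _ => mul_nonneg (hX i k) (hY k j)

lemma posSemidef_of_copositive {A : Matrix n n ℝ} (hsym : A.IsSymm) (hcop : Copositive A)
    (hz : ∀ i j, i ≠ j → A i j ≤ 0) : A.PosSemidef := by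
  refine PosSemidef.of_dotProduct_mulVec_nonneg ?_ (fun x => ?_)
  · rw [Matrix.IsHermitian, conjTranspose_eq_transpose_of_trivial]; exact hsym
  · rw [star_pi_real]
    exact le_trans (hcop (fun i => |x i|) fun i => abs_nonneg _) (abs_quad_le hz x)

lemma posDef_of_psd_det {A : Matrix n n ℝ} (hA : A.PosSemidef) (h : A.det ≠ 0) : A.PosDef := by
  refine PosDef.of_dotProduct_mulVec_pos hA.1 (fun x hx => ?_)
  rcases (hA.dotProduct_mulVec_nonneg x).lt_or_eq with hlt | heq
  · exact hlt
  · exact absurd (exists_mulVec_eq_zero_iff.mp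
      ⟨x, hx, (hA.dotProduct_mulVec_zero_iff x).1 heq.symm⟩) h

lemma inv_entries_nonneg {A : Matrix n n ℝ} (hA : A.PosDef)
    (hz : ∀ i j, i ≠ j → A i j ≤ 0) : ∀ i j, 0 ≤ A⁻¹ i j := by
  intro i j
  by_contra hneg
  push_neg at hneg
  set x : n → ℝ := fun k => A⁻¹ k j with hxdef
  set u : n → ℝ := fun k => max (x k) 0 with hudef
  set v : n → ℝ := fun k => max (-(x k)) 0 with hvdef
  have hu : ∀ k, 0 ≤ u k := fun k => le_max_right _ _
  have hv : ∀ k, 0 ≤ v k := fun k => le_max_right _ _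
  have huv : ∀ k, v k * u k = 0 := by
    intro k
    rcases le_total (x k) 0 with h'|h'
    · have : u k = 0 := max_eq_right h'
      rw [this, mul_zero]
    · have : v k = 0 := max_eq_right (neg_nonpos.mpr h')
      rw [this, zero_mul]
  have hueq : u = x + v := by
    funext k
    rcases le_total (x k) 0 with h'|h'
    · simp only [Pi.add_apply, hudef, hvdef]
      rw [max_eq_right h', max_eq_left (neg_nonneg.mpr h')]; ring
    · simp only [Pi.add_apply, hudef, hvdef]
      rw [max_eq_left h', max_eq_right (neg_nonpos.mpr h')]; ring
  have hAx : A *ᵥ x = fun k => (1 : Matrix n n ℝ) k j := by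
    funext k
    have : (A * A⁻¹) k j = (1 : Matrix n n ℝ) k j := by
      rw [Matrix.mul_nonsing_inv A hA.det_pos.ne'.isUnit]
    rw [← this, Matrix.mul_apply]
    simp [mulVec, dotProduct, hxdef]
  have key1 : v ⬝ᵥ A *ᵥ u ≤ 0 := by
    simp only [dotProduct, mulVec, Finset.mul_sum]
    refine Finset.sum_nonpos fun k _ => Finset.sum_nonpos fun l _ => ?_
    rcases eq_or_ne k l with rfl | hkl
    · have h' : v k * (A k k * u k) = A k k * (v k * u k) := by ring
      rw [h', huv k, mul_zero]
    · have h' : v k * (A k l * u l) = A k l * (v k * u l) := by ring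
      rw [h']
      exact mul_nonpos_iff.mpr (Or.inr ⟨hz k l hkl, mul_nonneg (hv k) (hu l)⟩)
  have key2 : v ⬝ᵥ A *ᵥ x = v j := by
    rw [hAx]
    simp [dotProduct, Matrix.one_apply]
  have hvj : 0 ≤ v j := hv j
  have hS : v ⬝ᵥ A *ᵥ v ≤ 0 := by
    have : v ⬝ᵥ A *ᵥ u = v ⬝ᵥ A *ᵥ x + v ⬝ᵥ A *ᵥ v := by
      rw [hueq, mulVec_add, dotProduct_add]
    linarith
  have hvne : v ≠ 0 := by
    intro h0
    have : v i = 0 := by rw [h0]; rfl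
    have : -(x i) ≤ 0 := by
      calc -(x i) ≤ v i := le_max_left _ _
      _ = 0 := this
    have : 0 ≤ A⁻¹ i j := by simpa [hxdef] using this
    linarith
  have := hA.dotProduct_mulVec_pos hvne
  rw [star_pi_real] at this
  linarith

lemma inv_le_inv_entrywise {C M : Matrix n n ℝ} (hCd : IsUnit C.det) (hMd : IsUnit M.det)
    (hCinv : ∀ i j, 0 ≤ C⁻¹ i j) (hMinv : ∀ i j, 0 ≤ M⁻¹ i j)
    (hle : ∀ i j, C i j ≤ M i j) : ∀ i j, M⁻¹ i j ≤ C⁻¹ i j := by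
  have key : C⁻¹ - M⁻¹ = C⁻¹ * (M - C) * M⁻¹ := by
    rw [Matrix.mul_sub, Matrix.sub_mul, Matrix.mul_assoc,
      Matrix.mul_nonsing_inv M hMd, Matrix.mul_one, Matrix.nonsing_inv_mul C hCd,
      Matrix.one_mul]
  intro i j
  have h0 : 0 ≤ (C⁻¹ * (M - C) * M⁻¹) i j :=
    mul_entry_nonneg (mul_entry_nonneg hCinv (fun i j => sub_nonneg.mpr (hle i j))) hMinv i j
  rw [← key] at h0
  simpa [Matrix.sub_apply] using sub_nonneg.mp (by simpa using h0)

end Aux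


theorem stmt_6 {r m : ℕ} (M : Matrix (Fin r) (Fin r) ℝ) (B : Matrix (Fin m) (Fin m) ℝ)
    (F : Matrix (Fin r) (Fin m) ℝ) (hM : M.IsSymm) (hB : B.IsSymm)
    (hMinv : IsUnit M.det) (hMcop : Copositive M)
    (hMoff : ∀ i j : Fin r, i ≠ j → M i j < 0)
    (hF : ∀ i j, F i j ≤ 0) :
    SPN (Matrix.fromBlocks M F Fᵀ B) ↔ SPN (B - Fᵀ * M⁻¹ * F) := by
  have hMz : ∀ i j : Fin r, i ≠ j → M i j ≤ 0 := fun i j h => (hMoff i j h).le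
  have hMpsd : M.PosSemidef := posSemidef_of_copositive hM hMcop hMz
  have hMpd : M.PosDef := posDef_of_psd_det hMpsd (by
    intro h; rw [h] at hMinv; exact (by simpa using hMinv : IsUnit (0:ℝ)).ne_zero rfl)
  haveI : Invertible M := M.invertibleOfIsUnitDet hMinv
  have hMinn : ∀ i j, 0 ≤ M⁻¹ i j := inv_entries_nonneg hMpd hMz
  have hFH : Fᴴ = Fᵀ := conjTranspose_eq_transpose_of_trivial F
  constructor
  · -- forward direction
    rintro ⟨P, N, hP, hN, hPN⟩
    have hPsym : ∀ a b, P a b = P b a := fun a b => by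
      have := hP.1.apply b a
      simpa using this
    have hMe : ∀ i j, M i j = P (Sum.inl i) (Sum.inl j) + N (Sum.inl i) (Sum.inl j) := by
      intro i j
      have := congrFun (congrFun hPN (Sum.inl i)) (Sum.inl j)
      simpa using this
    have hFe : ∀ i j, F i j = P (Sum.inl i) (Sum.inr j) + N (Sum.inl i) (Sum.inr j) := by
      intro i j
      have := congrFun (congrFun hPN (Sum.inl i)) (Sum.inr j)
      simpa using this
    have hBe : ∀ i j, B i j = P (Sum.inr i) (Sum.inr j) + N (Sum.inr i) (Sum.inr j) := by
      intro i j
      have := congrFun (congrFun hPN (Sum.inr i)) (Sum.inr j)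
      simpa using this
    set P11 : Matrix (Fin r) (Fin r) ℝ := P.submatrix Sum.inl Sum.inl with hP11def
    set P12 : Matrix (Fin r) (Fin m) ℝ := P.submatrix Sum.inl Sum.inr with hP12def
    set P22 : Matrix (Fin m) (Fin m) ℝ := P.submatrix Sum.inr Sum.inr with hP22def
    set d : Fin r → ℝ := fun i => N (Sum.inl i) (Sum.inl i) with hddef
    have hd : 0 ≤ d := fun i => hN _ _
    set C : Matrix (Fin r) (Fin r) ℝ := P11 + Matrix.diagonal d with hCdef
    have hP11 : P11.PosSemidef := hP.submatrix Sum.inl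
    have hP22 : P22.PosSemidef := hP.submatrix Sum.inr
    have hC : C.PosSemidef := hP11.add (PosSemidef.diagonal hd)
    have hCle : ∀ i j, C i j ≤ M i j := by
      intro i j
      rcases eq_or_ne i j with rfl | hij
      · have : C i i = M i i := by
          simp [hCdef, hP11def, hddef, Matrix.diagonal_apply_eq, hMe i i]
        exact this.le
      · have : C i j = P (Sum.inl i) (Sum.inl j) := by
          simp [hCdef, hP11def, Matrix.diagonal_apply_ne _ hij]
        rw [this, hMe i j]
        simpa using hN (Sum.inl i) (Sum.inl j)
    have hCoff : ∀ i j : Fin r, i ≠ j → C i j < 0 :=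
      fun i j h => lt_of_le_of_lt (hCle i j) (hMoff i j h)
    have hP12F : ∀ i j, P12 i j ≤ F i j := by
      intro i j
      rw [hFe i j]
      simpa [hP12def] using hN (Sum.inl i) (Sum.inr j)
    by_cases hCdet : C.det = 0
    · -- singular case: F = 0
      obtain ⟨x, hx0, hCx⟩ := exists_mulVec_eq_zero_iff.mpr hCdet
      set y : Fin r → ℝ := fun i => |x i| with hydef
      have hyC : C *ᵥ y = 0 := by
        apply (hC.dotProduct_mulVec_zero_iff y).1
        rw [star_pi_real]
        have h1 : y ⬝ᵥ C *ᵥ y ≤ x ⬝ᵥ C *ᵥ x := abs_quad_le (fun i j h => (hCoff i j h).le) x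
        have h2 : x ⬝ᵥ C *ᵥ x = 0 := by rw [hCx, dotProduct_zero]
        have h3 : 0 ≤ y ⬝ᵥ C *ᵥ y := by
          have := hC.dotProduct_mulVec_nonneg y; rwa [star_pi_real] at this
        linarith
      have hypos : ∀ i, 0 < y i := by
        intro i
        rcases (abs_nonneg (x i)).lt_or_eq with h | h
        · exact h
        · exfalso
          obtain ⟨j0, hj0⟩ : ∃ j, y j ≠ 0 := by
            by_contra hall
            push_neg at hall
            exact hx0 (funext fun k => abs_eq_zero.mp (hall k))
          have hj0pos : 0 < y j0 := lt_of_le_of_ne (abs_nonneg _) (Ne.symm hj0)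
          have hij : i ≠ j0 := by
            rintro rfl; exact hj0 h.symm
          have hsum0 : (C *ᵥ y) i = 0 := by rw [hyC]; rfl
          have hlt : (C *ᵥ y) i < 0 := by
            rw [mulVec, dotProduct]
            have : ∑ j, C i j * y j < ∑ _j : Fin r, (0:ℝ) := by
              refine Finset.sum_lt_sum (fun j _ => ?_) ⟨j0, Finset.mem_univ j0, ?_⟩
              · rcases eq_or_ne j i with rfl | hji
                · rw [show y j = 0 from h.symm, mul_zero]
                · exact mul_nonpos_iff.mpr (Or.inr ⟨(hCoff i j (Ne.symm hji)).le, abs_nonneg _⟩)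
              · exact mul_neg_of_neg_of_pos (hCoff i j0 hij) hj0pos
            simpa using this
          linarith
      have hyP11 : P11 *ᵥ y = 0 := by
        apply (hP11.dotProduct_mulVec_zero_iff y).1
        rw [star_pi_real]
        have hsplit : y ⬝ᵥ C *ᵥ y = y ⬝ᵥ P11 *ᵥ y + y ⬝ᵥ (Matrix.diagonal d) *ᵥ y := by
          rw [hCdef, Matrix.add_mulVec, dotProduct_add]
        have h0 : y ⬝ᵥ C *ᵥ y = 0 := by rw [hyC, dotProduct_zero]
        have h1 : 0 ≤ y ⬝ᵥ P11 *ᵥ y := by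
          have := hP11.dotProduct_mulVec_nonneg y; rwa [star_pi_real] at this
        have h2 : 0 ≤ y ⬝ᵥ (Matrix.diagonal d) *ᵥ y := by
          rw [dotProduct]
          refine Finset.sum_nonneg fun k _ => ?_
          rw [mulVec_diagonal]
          exact mul_nonneg (hypos k).le (mul_nonneg (hd k) (hypos k).le)
        linarith
      set z : (Fin r ⊕ Fin m) → ℝ := Sum.elim y 0 with hzdef
      have hPz : P *ᵥ z = 0 := by
        apply (hP.dotProduct_mulVec_zero_iff z).1
        rw [star_pi_real]
        rw [dotProduct]
        refine Finset.sum_eq_zero ?_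
        rintro (i | i) -
        · have : (P *ᵥ z) (Sum.inl i) = 0 := by
            rw [mulVec, dotProduct, Fintype.sum_sum_type]
            have := congrFun hyP11 i
            rw [mulVec, dotProduct] at this
            simpa [hzdef, hP11def] using this
          rw [this, mul_zero]
        · simp [hzdef]
      have hF0 : F = 0 := by
        ext i j
        have hPz2 := congrFun hPz (Sum.inr j)
        rw [mulVec, dotProduct, Fintype.sum_sum_type] at hPz2
        simp only [hzdef, Sum.elim_inl, Sum.elim_inr, Pi.zero_apply, mul_zero,
          Finset.sum_const_zero, add_zero] at hPz2
        have hterms : ∀ k ∈ Finset.univ, P (Sum.inr j) (Sum.inl k) * y k ≤ 0 := by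
          intro k _
          have hPk : P (Sum.inr j) (Sum.inl k) ≤ 0 := by
            rw [hPsym (Sum.inr j) (Sum.inl k)]
            have := hFe k j
            have := hN (Sum.inl k) (Sum.inr j)
            have := hF k j
            linarith
          exact mul_nonpos_iff.mpr (Or.inr ⟨hPk, (hypos k).le⟩)
        have := (Finset.sum_eq_zero_iff_of_nonpos hterms).1 (by simpa using hPz2)
          i (Finset.mem_univ i)
        have hPi : P (Sum.inl i) (Sum.inr j) = 0 := by
          have hy := (hypos i).ne'
          have := mul_eq_zero.mp this
          rcases this with h' | h'
          · rw [hPsym (Sum.inl i) (Sum.inr j)]; exact h'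
          · exact absurd h' hy
        have h1 := hFe i j
        have h2 := hN (Sum.inl i) (Sum.inr j)
        have h3 := hF i j
        simp only [Pi.zero_apply, Matrix.zero_apply]
        linarith
      rw [hF0]
      simp only [Matrix.transpose_zero, Matrix.zero_mul, Matrix.mul_zero, sub_zero]
      refine ⟨P22, Matrix.of fun i j => N (Sum.inr i) (Sum.inr j), hP22,
        fun i j => hN _ _, ?_⟩
      ext i j
      simpa [hP22def] using hBe i j
    · -- nonsingular case
      have hCpd : C.PosDef := posDef_of_psd_det hC hCdet
      haveI : Invertible C := C.invertibleOfIsUnitDet (isUnit_iff_ne_zero.mpr hCdet)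
      have hCdu : IsUnit C.det := isUnit_iff_ne_zero.mpr hCdet
      have hCinn : ∀ i j, 0 ≤ C⁻¹ i j :=
        inv_entries_nonneg hCpd (fun i j h => (hCoff i j h).le)
      have hMleC : ∀ i j, M⁻¹ i j ≤ C⁻¹ i j :=
        inv_le_inv_entrywise hCdu hMinv hCinn hMinn hCle
      have hX : (Matrix.fromBlocks C P12 P12ᴴ P22).PosSemidef := by
        have hXeq : Matrix.fromBlocks C P12 P12ᴴ P22
            = P + Matrix.diagonal (Sum.elim d 0) := by
          ext a b
          rcases a with i | i <;> rcases b with j | j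
          · rcases eq_or_ne i j with rfl | hij
            · simp [hCdef, hP11def, hddef, Matrix.diagonal_apply, Sum.inl.injEq]
            · simp [hCdef, hP11def, Matrix.diagonal_apply, Sum.inl.injEq, hij]
          · simp [hP12def, Matrix.diagonal_apply]
          · simp [hP12def, Matrix.diagonal_apply, hPsym (Sum.inr i) (Sum.inl j)]
          · rcases eq_or_ne i j with rfl | hij
            · simp [hP22def, Matrix.diagonal_apply]
            · simp [hP22def, Matrix.diagonal_apply, Sum.inr.injEq, hij]
        rw [hXeq]
        refine hP.add (PosSemidef.diagonal ?_)
        rw [Pi.le_def]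
        rintro (i | i)
        · simpa using hd i
        · simp
      have hS : (P22 - P12ᴴ * C⁻¹ * P12).PosSemidef :=
        (PosDef.fromBlocks₁₁ P12 P22 hCpd).1 hX
      have hP12H : P12ᴴ = P12ᵀ := conjTranspose_eq_transpose_of_trivial P12
      rw [hP12H] at hS
      have claim : ∀ i j, (Fᵀ * M⁻¹ * F) i j ≤ (P12ᵀ * C⁻¹ * P12) i j := by
        intro i j
        simp only [Matrix.mul_apply, Finset.sum_mul, Matrix.transpose_apply]
        refine Finset.sum_le_sum fun k _ => Finset.sum_le_sum fun l _ => ?_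
        have h1 : P12 l i ≤ F l i := hP12F l i
        have h2 : F l i ≤ 0 := hF l i
        have h3 : 0 ≤ M⁻¹ l k := hMinn l k
        have h4 : M⁻¹ l k ≤ C⁻¹ l k := hMleC l k
        have h5 : P12 k j ≤ F k j := hP12F k j
        have h6 : F k j ≤ 0 := hF k j
        have step1 : (-(F l i)) * M⁻¹ l k ≤ (-(P12 l i)) * C⁻¹ l k :=
          mul_le_mul (by linarith) h4 h3 (by linarith)
        have step2 : (-(F l i)) * M⁻¹ l k * (-(F k j))
            ≤ (-(P12 l i)) * C⁻¹ l k * (-(P12 k j)) :=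
          mul_le_mul step1 (by linarith) (by linarith)
            (mul_nonneg (by linarith) (le_trans h3 h4))
        have e1 : (-(F l i)) * M⁻¹ l k * (-(F k j)) = F l i * M⁻¹ l k * F k j := by ring
        have e2 : (-(P12 l i)) * C⁻¹ l k * (-(P12 k j)) = P12 l i * C⁻¹ l k * P12 k j := by
          ring
        linarith [step2, e1.symm.le, e2.le]
      refine ⟨P22 - P12ᵀ * C⁻¹ * P12,
        (B - Fᵀ * M⁻¹ * F) - (P22 - P12ᵀ * C⁻¹ * P12), hS, ?_, by abel⟩
      intro i j
      have hb := hBe i j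
      have hn := hN (Sum.inr i) (Sum.inr j)
      have hc := claim i j
      have hP22e : P22 i j = P (Sum.inr i) (Sum.inr j) := by simp [hP22def]
      simp only [Matrix.sub_apply]
      linarith [hP22e.le, hP22e.ge]
  · -- backward direction
    rintro ⟨Q, N, hQ, hN, hQN⟩
    refine ⟨Matrix.fromBlocks M F Fᵀ (Fᵀ * M⁻¹ * F + Q),
      Matrix.fromBlocks 0 0 0 N, ?_, ?_, ?_⟩
    · rw [← hFH]
      refine (PosDef.fromBlocks₁₁ F (Fᴴ * M⁻¹ * F + Q) hMpd).2 ?_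
      have : Fᴴ * M⁻¹ * F + Q - Fᴴ * M⁻¹ * F = Q := by abel
      rw [hFH] at this ⊢
      rw [this]
      exact hQ
    · rintro (i | i) (j | j)
      · simp
      · simp
      · simp
      · simpa using hN i j
    · have hB2 : Fᵀ * M⁻¹ * F + Q + N = B := by
        rw [add_assoc, ← hQN]; abel
      rw [Matrix.fromBlocks_add]
      rw [show (Fᵀ * M⁻¹ * F + Q) + N = B from hB2]
      simp
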